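/- arXiv:1507.01071 — 2 statements merged into one kernel-verified Lean document; each statement's English description precedes it below -/
import Mathlib

section
/- If piecewise-linear boundaries b_n converge uniformly to b on [t_0, τ], then the survival probabilities converge: lim_{n→∞} P(T_{b_n} > τ) = P(T_b > τ), for a standard Brownian motion W starting at x_0 < b(t_0), provided P(sup_{t∈[t_0,τ]}(W(t) - b(t)) = 0) = 0. -/
open MeasureTheory ProbabilityTheory Set

noncomputable section

/-- A (two-sided) standard Brownian motion: continuous paths, `W 0 = 0`,
Gaussian increments and independent increments. -/
def IsStandardBM {Ω : Type*} [MeasureSpace Ω] (W : ℝ → Ω → ℝ) : Prop :=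
  (∀ ω, Continuous fun t => W t ω) ∧
  (∀ ω, W 0 ω = 0) ∧
  (∀ s t : ℝ, s ≤ t →
    Measure.map (fun ω => W t ω - W s ω) (volume : Measure Ω)
      = gaussianReal 0 (Real.toNNReal (t - s))) ∧
  (∀ n : ℕ, ∀ t : Fin (n + 1) → ℝ, Monotone t →
    iIndepFun (m := fun _ => Real.measurableSpace)
      (fun i : Fin n => fun ω => W (t i.succ) ω - W (t i.castSucc) ω)
      (volume : Measure Ω))

/-- First passage time of the process `X` to the boundary `c` after time `t₀`,
valued in `EReal`, with the convention `inf ∅ = ⊤`. -/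
def FPT {Ω : Type*} (X : ℝ → Ω → ℝ) (c : ℝ → ℝ) (t₀ : ℝ) (ω : Ω) : EReal :=
  ⨅ t : {t : ℝ // t₀ < t ∧ c t ≤ X t ω}, ((t : ℝ) : EReal)

/-- If the path stays strictly below the boundary on `[t₀, τ]`, the FPT is `> τ`. -/
lemma lemA1 {Ω : Type*} (X : ℝ → Ω → ℝ) (c : ℝ → ℝ) (t₀ τ : ℝ) (hττ : t₀ ≤ τ) (ω : Ω)
    (hXc : Continuous fun t => X t ω) (hc : Continuous c)
    (h : sSup ((fun t => X t ω - c t) '' Set.Icc t₀ τ) < 0) :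
    (τ : EReal) < FPT X c t₀ ω := by
  have hfc : Continuous fun t => X t ω - c t := hXc.sub hc
  have hbdd : BddAbove ((fun t => X t ω - c t) '' Set.Icc t₀ τ) :=
    (isCompact_Icc.image hfc).bddAbove
  have hfτ : X τ ω - c τ < 0 :=
    lt_of_le_of_lt (le_csSup hbdd ⟨τ, ⟨hττ, le_refl τ⟩, rfl⟩) h
  have hopen : IsOpen {t : ℝ | X t ω - c t < 0} := isOpen_lt hfc continuous_const
  obtain ⟨ε, hε, hball⟩ := Metric.mem_nhds_iff.1 (hopen.mem_nhds hfτ)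
  have key : ∀ s : {t : ℝ // t₀ < t ∧ c t ≤ X t ω}, (τ + ε / 2 : ℝ) ≤ (s : ℝ) := by
    rintro ⟨s, hs₀, hsc⟩
    by_contra hlt
    push_neg at hlt
    have hfs : (0 : ℝ) ≤ X s ω - c s := sub_nonneg.2 hsc
    rcases le_or_gt s τ with h1 | h1
    · have : X s ω - c s ≤ sSup ((fun t => X t ω - c t) '' Set.Icc t₀ τ) :=
        le_csSup hbdd ⟨s, ⟨le_of_lt hs₀, h1⟩, rfl⟩
      linarith
    · have hmem : s ∈ Metric.ball τ ε := by
        rw [Metric.mem_ball, Real.dist_eq, abs_lt]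
        constructor <;> linarith
      have := hball hmem
      simp only [Set.mem_setOf_eq] at this
      linarith
  have hle : ((τ + ε / 2 : ℝ) : EReal) ≤ FPT X c t₀ ω :=
    le_iInf fun s => EReal.coe_le_coe_iff.2 (key s)
  refine lt_of_lt_of_le ?_ hle
  exact_mod_cast (by linarith : τ < τ + ε / 2)

/-- If the FPT is `> τ` and the start is below the boundary, the sup is `≤ 0`. -/
lemma lemA2 {Ω : Type*} (X : ℝ → Ω → ℝ) (c : ℝ → ℝ) (t₀ τ : ℝ) (hττ : t₀ ≤ τ) (ω : Ω)
    (h : (τ : EReal) < FPT X c t₀ ω) (h0 : X t₀ ω < c t₀) :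
    sSup ((fun t => X t ω - c t) '' Set.Icc t₀ τ) ≤ 0 := by
  apply csSup_le ((Set.nonempty_Icc.2 hττ).image _)
  rintro y ⟨t, ⟨ht₀, htτ⟩, rfl⟩
  simp only
  rcases eq_or_lt_of_le ht₀ with rfl | ht
  · linarith
  · by_contra hpos
    push_neg at hpos
    have hmem : c t ≤ X t ω := by linarith
    have h1 : FPT X c t₀ ω ≤ ((t : ℝ) : EReal) :=
      iInf_le (fun s : {t : ℝ // t₀ < t ∧ c t ≤ X t ω} => ((s : ℝ) : EReal)) ⟨t, ht, hmem⟩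
    have h2 : FPT X c t₀ ω ≤ (τ : EReal) := le_trans h1 (EReal.coe_le_coe_iff.2 htτ)
    exact absurd h (not_lt.2 h2)

/-- Comparison of suprema for nearby boundaries. -/
lemma lemB {Ω : Type*} (X : ℝ → Ω → ℝ) (c c' : ℝ → ℝ) (t₀ τ : ℝ) (hττ : t₀ ≤ τ) (ω : Ω)
    (hXc : Continuous fun t => X t ω) (hc : Continuous c) (r : ℝ)
    (hcc' : ∀ t ∈ Set.Icc t₀ τ, |c t - c' t| ≤ r) :
    sSup ((fun t => X t ω - c' t) '' Set.Icc t₀ τ)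
      ≤ sSup ((fun t => X t ω - c t) '' Set.Icc t₀ τ) + r := by
  have hbdd : BddAbove ((fun t => X t ω - c t) '' Set.Icc t₀ τ) :=
    (isCompact_Icc.image (hXc.sub hc)).bddAbove
  apply csSup_le ((Set.nonempty_Icc.2 hττ).image _)
  rintro y ⟨t, ht, rfl⟩
  have h1 : X t ω - c t ≤ sSup ((fun t => X t ω - c t) '' Set.Icc t₀ τ) :=
    le_csSup hbdd ⟨t, ht, rfl⟩
  have h2 := abs_le.1 (hcc' t ht)
  simp only
  linarith [h2.1, h2.2]

/-- if boundaries `bn` converge uniformly to `b` on `[t₀, τ]`, the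
survival probabilities of the corresponding FPTs of a Brownian motion started at
`x₀ < b t₀` converge, provided the supremum of `X - b` on `[t₀, τ]` is a.s. nonzero. -/
theorem survival_prob_tendsto_of_tendstoUniformlyOn
    {Ω : Type*} [MeasureSpace Ω] [IsProbabilityMeasure (volume : Measure Ω)]
    (W : ℝ → Ω → ℝ) (hW : IsStandardBM W)
    (t₀ τ x₀ : ℝ) (hττ : t₀ ≤ τ)
    (X : ℝ → Ω → ℝ) (hX : ∀ t ω, X t ω = x₀ + (W t ω - W t₀ ω))
    (b : ℝ → ℝ) (bn : ℕ → ℝ → ℝ)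
    (hb : Continuous b) (hbn : ∀ n, Continuous (bn n)) (hx₀ : x₀ < b t₀)
    (hunif : TendstoUniformlyOn bn b Filter.atTop (Icc t₀ τ))
    (hsup : volume {ω | sSup ((fun t => X t ω - b t) '' Icc t₀ τ) = 0} = 0) :
    Filter.Tendsto
      (fun n => (volume {ω | (τ : EReal) < FPT X (bn n) t₀ ω}).toReal)
      Filter.atTop
      (nhds ((volume {ω | (τ : EReal) < FPT X b t₀ ω}).toReal)) := by
  -- continuity of paths and value at `t₀`
  have hXcont : ∀ ω, Continuous fun t => X t ω := by
    intro ω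
    have h1 : (fun t => X t ω) = fun t => x₀ + (W t ω - W t₀ ω) := funext fun t => hX t ω
    rw [h1]
    exact continuous_const.add ((hW.1 ω).sub continuous_const)
  have hX0 : ∀ ω, X t₀ ω = x₀ := fun ω => by rw [hX]; ring
  -- a.e. measurability of `X t`
  have hWae : ∀ t, t₀ ≤ t → AEMeasurable (fun ω => W t ω - W t₀ ω) (volume : Measure Ω) := by
    intro t ht
    by_contra hcon
    have hmap := hW.2.2.1 t₀ t ht
    rw [Measure.map_of_not_aemeasurable hcon] at hmap
    have h1 : (gaussianReal 0 (Real.toNNReal (t - t₀))) Set.univ = 1 := measure_univ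
    rw [← hmap] at h1
    simp at h1
  have hXae : ∀ t, t₀ ≤ t → AEMeasurable (X t) (volume : Measure Ω) := by
    intro t ht
    have h1 : X t = fun ω => x₀ + (W t ω - W t₀ ω) := funext fun ω => hX t ω
    rw [h1]
    exact ((hWae t ht).const_add x₀)
  -- countable dense subset of `Icc t₀ τ`
  obtain ⟨u, hu_c, hu_d⟩ := TopologicalSpace.exists_countable_dense ↥(Set.Icc t₀ τ)
  set D : Set ℝ := Subtype.val '' u with hD
  have hDsub : D ⊆ Icc t₀ τ := by rintro x ⟨⟨y, hy⟩, -, rfl⟩; exact hy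
  have hDcl : Icc t₀ τ ⊆ closure D := by
    intro x hx
    have h1 : (⟨x, hx⟩ : ↥(Icc t₀ τ)) ∈ closure u := by
      rw [hu_d.closure_eq]; trivial
    exact image_closure_subset_closure_image continuous_subtype_val ⟨⟨x, hx⟩, h1, rfl⟩
  have hDcount : D.Countable := hu_c.image _
  -- null-measurability of sublevel sets of the running supremum
  have hsetEq : ∀ r : ℝ,
      {ω | sSup ((fun t => X t ω - b t) '' Icc t₀ τ) ≤ r}
        = ⋂ t ∈ D, {ω | X t ω - b t ≤ r} := by
    intro r
    ext ω
    simp only [Set.mem_setOf_eq, Set.mem_iInter]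
    constructor
    · intro h t ht
      exact le_trans
        (le_csSup ((isCompact_Icc.image ((hXcont ω).sub hb)).bddAbove) ⟨t, hDsub ht, rfl⟩) h
    · intro h
      apply csSup_le ((Set.nonempty_Icc.2 hττ).image _)
      rintro y ⟨t, ht, rfl⟩
      have hC : IsClosed ((fun t => X t ω - b t) ⁻¹' Set.Iic r) :=
        isClosed_Iic.preimage ((hXcont ω).sub hb)
      have hDC : D ⊆ (fun t => X t ω - b t) ⁻¹' Set.Iic r := fun s hs => h s hs
      exact closure_minimal hDC hC (hDcl ht)
  have hNM : ∀ r : ℝ,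
      NullMeasurableSet {ω | sSup ((fun t => X t ω - b t) '' Icc t₀ τ) ≤ r}
        (volume : Measure Ω) := by
    intro r
    rw [hsetEq r]
    refine NullMeasurableSet.biInter hDcount fun t ht => ?_
    have h1 : {ω | X t ω - b t ≤ r} = X t ⁻¹' Set.Iic (r + b t) := by
      ext ω; simp [sub_le_iff_le_add]
    rw [h1]
    exact (hXae t (hDsub ht).1).nullMeasurable measurableSet_Iic
  -- measure of "≤ 0" equals measure of "< 0"
  have hle0 : volume {ω | sSup ((fun t => X t ω - b t) '' Icc t₀ τ) ≤ 0}
      = volume {ω | sSup ((fun t => X t ω - b t) '' Icc t₀ τ) < 0} := by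
    apply le_antisymm
    · calc volume {ω | sSup ((fun t => X t ω - b t) '' Icc t₀ τ) ≤ 0}
          ≤ volume ({ω | sSup ((fun t => X t ω - b t) '' Icc t₀ τ) < 0}
              ∪ {ω | sSup ((fun t => X t ω - b t) '' Icc t₀ τ) = 0}) :=
            measure_mono (fun ω h => by
              simp only [Set.mem_setOf_eq, Set.mem_union] at h ⊢
              exact lt_or_eq_of_le h)
        _ ≤ volume {ω | sSup ((fun t => X t ω - b t) '' Icc t₀ τ) < 0}
              + volume {ω | sSup ((fun t => X t ω - b t) '' Icc t₀ τ) = 0} :=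
            measure_union_le _ _
        _ = volume {ω | sSup ((fun t => X t ω - b t) '' Icc t₀ τ) < 0} := by
            rw [hsup]; simp
    · exact measure_mono fun ω h => by
        simp only [Set.mem_setOf_eq] at h ⊢; exact le_of_lt h
  -- the survival probability equals the measure of "< 0"
  have hA : volume {ω | (τ : EReal) < FPT X b t₀ ω}
      = volume {ω | sSup ((fun t => X t ω - b t) '' Icc t₀ τ) < 0} := by
    apply le_antisymm
    · calc volume {ω | (τ : EReal) < FPT X b t₀ ω}
          ≤ volume {ω | sSup ((fun t => X t ω - b t) '' Icc t₀ τ) ≤ 0} :=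
            measure_mono (fun ω h => lemA2 X b t₀ τ hττ ω h (by rw [hX0]; exact hx₀))
        _ = volume {ω | sSup ((fun t => X t ω - b t) '' Icc t₀ τ) < 0} := hle0
    · exact measure_mono fun ω h => lemA1 X b t₀ τ hττ ω (hXcont ω) hb h
  -- limits along the thresholds ±1/(k+1)
  have hUnionEq : (⋃ k : ℕ, {ω | sSup ((fun t => X t ω - b t) '' Icc t₀ τ) ≤ -(1/((k:ℝ)+1))})
      = {ω | sSup ((fun t => X t ω - b t) '' Icc t₀ τ) < 0} := by
    ext ω
    simp only [Set.mem_iUnion, Set.mem_setOf_eq]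
    constructor
    · rintro ⟨k, hk⟩
      have hpos : (0:ℝ) < 1/((k:ℝ)+1) := by positivity
      linarith
    · intro h
      obtain ⟨k, hk⟩ := exists_nat_one_div_lt
        (show (0:ℝ) < -(sSup ((fun t => X t ω - b t) '' Icc t₀ τ)) by linarith)
      exact ⟨k, by linarith⟩
  have hMonoU : Monotone fun k : ℕ =>
      {ω | sSup ((fun t => X t ω - b t) '' Icc t₀ τ) ≤ -(1/((k:ℝ)+1))} := by
    intro k k' hkk ω h
    simp only [Set.mem_setOf_eq] at h ⊢
    have h1 : 1/((k':ℝ)+1) ≤ 1/((k:ℝ)+1) := by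
      apply one_div_le_one_div_of_le (by positivity)
      have : (k:ℝ) ≤ (k':ℝ) := by exact_mod_cast hkk
      linarith
    linarith
  have hL : Filter.Tendsto
      (fun k : ℕ => volume {ω | sSup ((fun t => X t ω - b t) '' Icc t₀ τ) ≤ -(1/((k:ℝ)+1))})
      Filter.atTop (nhds (volume {ω | sSup ((fun t => X t ω - b t) '' Icc t₀ τ) < 0})) := by
    have h1 := tendsto_measure_iUnion_atTop (μ := (volume : Measure Ω)) hMonoU
    rw [hUnionEq] at h1
    simpa [Function.comp_def] using h1
  have hInterEq : (⋂ k : ℕ, {ω | sSup ((fun t => X t ω - b t) '' Icc t₀ τ) ≤ 1/((k:ℝ)+1)})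
      = {ω | sSup ((fun t => X t ω - b t) '' Icc t₀ τ) ≤ 0} := by
    ext ω
    simp only [Set.mem_iInter, Set.mem_setOf_eq]
    constructor
    · intro h
      by_contra h0
      push_neg at h0
      obtain ⟨k, hk⟩ := exists_nat_one_div_lt h0
      linarith [h k]
    · intro h k
      have hpos : (0:ℝ) < 1/((k:ℝ)+1) := by positivity
      linarith
  have hAntiU : Antitone fun k : ℕ =>
      {ω | sSup ((fun t => X t ω - b t) '' Icc t₀ τ) ≤ 1/((k:ℝ)+1)} := by
    intro k k' hkk ω h
    simp only [Set.mem_setOf_eq] at h ⊢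
    have h1 : 1/((k':ℝ)+1) ≤ 1/((k:ℝ)+1) := by
      apply one_div_le_one_div_of_le (by positivity)
      have : (k:ℝ) ≤ (k':ℝ) := by exact_mod_cast hkk
      linarith
    linarith
  have hU : Filter.Tendsto
      (fun k : ℕ => volume {ω | sSup ((fun t => X t ω - b t) '' Icc t₀ τ) ≤ 1/((k:ℝ)+1)})
      Filter.atTop (nhds (volume {ω | sSup ((fun t => X t ω - b t) '' Icc t₀ τ) < 0})) := by
    have h1 := tendsto_measure_iInter_atTop (μ := (volume : Measure Ω))
      (fun k => hNM _) hAntiU ⟨0, measure_ne_top _ _⟩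
    rw [hInterEq, hle0] at h1
    simpa [Function.comp_def] using h1
  -- pass to `toReal`
  have hL' := (ENNReal.tendsto_toReal (measure_ne_top (volume : Measure Ω) _)).comp hL
  have hU' := (ENNReal.tendsto_toReal (measure_ne_top (volume : Measure Ω) _)).comp hU
  rw [hA]
  rw [Metric.tendsto_nhds]
  intro ε hε
  obtain ⟨k, hkL, hkU⟩ :=
    ((Metric.tendsto_nhds.1 hL' ε hε).and (Metric.tendsto_nhds.1 hU' ε hε)).exists
  simp only [Function.comp] at hkL hkU
  set δ : ℝ := 1/((k:ℝ)+1) with hδ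
  have hδpos : 0 < δ := by positivity
  have hn1 : ∀ᶠ n in Filter.atTop, ∀ x ∈ Icc t₀ τ, dist (b x) (bn n x) < δ/2 :=
    Metric.tendstoUniformlyOn_iff.1 hunif (δ/2) (by positivity)
  have hn2 : ∀ᶠ n in Filter.atTop, ∀ x ∈ Icc t₀ τ, dist (b x) (bn n x) < b t₀ - x₀ :=
    Metric.tendstoUniformlyOn_iff.1 hunif _ (by linarith)
  filter_upwards [hn1, hn2] with n h1 h2
  have hb1 : ∀ t ∈ Icc t₀ τ, |b t - bn n t| ≤ δ/2 := fun t ht => by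
    have := h1 t ht
    rw [Real.dist_eq] at this
    linarith
  have hbn0 : x₀ < bn n t₀ := by
    have h3 := h2 t₀ ⟨le_refl _, hττ⟩
    rw [Real.dist_eq] at h3
    have h4 := abs_lt.1 h3
    linarith [h4.1, h4.2]
  -- sandwich inclusions
  have hsub1 : {ω | sSup ((fun t => X t ω - b t) '' Icc t₀ τ) ≤ -δ}
      ⊆ {ω | (τ : EReal) < FPT X (bn n) t₀ ω} := by
    intro ω hω
    simp only [Set.mem_setOf_eq] at hω ⊢
    apply lemA1 X (bn n) t₀ τ hττ ω (hXcont ω) (hbn n)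
    have h3 := lemB X b (bn n) t₀ τ hττ ω (hXcont ω) hb (δ/2) hb1
    linarith
  have hsub2 : {ω | (τ : EReal) < FPT X (bn n) t₀ ω}
      ⊆ {ω | sSup ((fun t => X t ω - b t) '' Icc t₀ τ) ≤ δ} := by
    intro ω hω
    simp only [Set.mem_setOf_eq] at hω ⊢
    have h3 : sSup ((fun t => X t ω - bn n t) '' Icc t₀ τ) ≤ 0 :=
      lemA2 X (bn n) t₀ τ hττ ω hω (by rw [hX0]; exact hbn0)
    have h4 := lemB X (bn n) b t₀ τ hττ ω (hXcont ω) (hbn n) (δ/2)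
      (fun t ht => by rw [abs_sub_comm]; exact hb1 t ht)
    linarith
  have e1 : (volume {ω | sSup ((fun t => X t ω - b t) '' Icc t₀ τ) ≤ -δ}).toReal
      ≤ (volume {ω | (τ : EReal) < FPT X (bn n) t₀ ω}).toReal :=
    ENNReal.toReal_mono (measure_ne_top _ _) (measure_mono hsub1)
  have e2 : (volume {ω | (τ : EReal) < FPT X (bn n) t₀ ω}).toReal
      ≤ (volume {ω | sSup ((fun t => X t ω - b t) '' Icc t₀ τ) ≤ δ}).toReal :=
    ENNReal.toReal_mono (measure_ne_top _ _) (measure_mono hsub2)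
  rw [Real.dist_eq, abs_lt]
  rw [Real.dist_eq] at hkL hkU
  have h5 := abs_lt.1 hkL
  have h6 := abs_lt.1 hkU
  constructor <;> linarith [h5.1, h5.2, h6.1, h6.2]
end
end

section
/- The function t ↦ (α - x_0)/√(2πσ²t³) · exp(-[α - x_0 - (μ-β)t]²/(2σ²t)) integrates to 1 over (0, ∞) whenever α > x_0 and μ > β, i.e., the first passage time of a drifted Brownian motion to a linear boundary with slope less than the drift is almost surely finite. -/
open MeasureTheory Set Filter Real Topology

noncomputable section

def gaussFn (y : ℝ) : ℝ := Real.exp (-(y ^ 2 / 2))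

lemma gaussFn_eq : gaussFn = fun y : ℝ => Real.exp (-(1/2 : ℝ) * y ^ 2) := by
  funext y; simp only [gaussFn]; ring_nf

lemma gaussFn_integrable : Integrable gaussFn := by
  rw [gaussFn_eq]; exact integrable_exp_neg_mul_sq (by norm_num)

lemma gaussFn_continuous : Continuous gaussFn := by
  unfold gaussFn; fun_prop

lemma gaussFn_total : (∫ y : ℝ, gaussFn y) = Real.sqrt (2 * π) := by
  rw [gaussFn_eq]
  rw [show (fun y : ℝ => Real.exp (-(1/2 : ℝ) * y ^ 2)) = fun y : ℝ => Real.exp (-(1/2 : ℝ) * y ^ 2) from rfl]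
  have h := integral_gaussian (1/2 : ℝ)
  rw [h, show π / (1/2 : ℝ) = 2 * π by ring]

def Phi (x : ℝ) : ℝ := ∫ y in Iic x, gaussFn y

lemma Phi_eq (x : ℝ) : Phi x = Phi 0 + ∫ y in (0:ℝ)..x, gaussFn y := by
  rw [← intervalIntegral.integral_Iic_sub_Iic gaussFn_integrable.integrableOn
    gaussFn_integrable.integrableOn]
  simp only [Phi]; ring

lemma hasDerivAt_Phi (x : ℝ) : HasDerivAt Phi (gaussFn x) x := by
  have h : HasDerivAt (fun z => Phi 0 + ∫ y in (0:ℝ)..z, gaussFn y) (gaussFn x) x :=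
    (intervalIntegral.integral_hasDerivAt_right (gaussFn_integrable.intervalIntegrable)
      (gaussFn_continuous.stronglyMeasurableAtFilter _ _) gaussFn_continuous.continuousAt).const_add _
  exact h.congr_of_eventuallyEq (Eventually.of_forall fun z => Phi_eq z)

lemma Phi_tendsto_atTop : Tendsto Phi atTop (𝓝 (Real.sqrt (2 * π))) := by
  have h := intervalIntegral_tendsto_integral_Ioi 0 gaussFn_integrable.integrableOn tendsto_id
  have h2 : Tendsto Phi atTop (𝓝 (Phi 0 + ∫ y in Ioi (0:ℝ), gaussFn y)) :=
    Tendsto.congr (fun x => (Phi_eq x).symm) (tendsto_const_nhds.add h)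
  have h3 : Phi 0 + (∫ y in Ioi (0:ℝ), gaussFn y) = Real.sqrt (2 * π) := by
    rw [← gaussFn_total]
    exact intervalIntegral.integral_Iic_add_Ioi gaussFn_integrable.integrableOn gaussFn_integrable.integrableOn
  rwa [h3] at h2

lemma Phi_tendsto_atBot : Tendsto Phi atBot (𝓝 0) := by
  have h := intervalIntegral_tendsto_integral_Iic 0 gaussFn_integrable.integrableOn tendsto_id
  have heq : ∀ x : ℝ, Phi x = Phi 0 - ∫ y in x..(0:ℝ), gaussFn y := by
    intro x; rw [Phi_eq x, intervalIntegral.integral_symm]; ring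
  have h2 : Tendsto Phi atBot (𝓝 (Phi 0 - Phi 0)) :=
    Tendsto.congr (fun x => (heq x).symm) (tendsto_const_nhds.sub h)
  simpa using h2

lemma key_hasDerivAt (a c σ : ℝ) (hσ : 0 < σ) {t : ℝ} (ht : 0 < t) :
    HasDerivAt (fun s => Phi ((c * s - a) / (σ * Real.sqrt s))
        - Real.exp (2 * a * c / σ ^ 2) * Phi ((c * s + a) / (σ * Real.sqrt s)))
      (Real.sqrt (2 * π) * (a / Real.sqrt (2 * π * σ ^ 2 * t ^ 3) *
        Real.exp (-(a - c * t) ^ 2 / (2 * σ ^ 2 * t)))) t := by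
  have hst : (0:ℝ) < Real.sqrt t := Real.sqrt_pos.2 ht
  have hsd : HasDerivAt (fun s : ℝ => σ * Real.sqrt s) (σ * (1 / (2 * Real.sqrt t))) t :=
    (Real.hasDerivAt_sqrt ht.ne').const_mul σ
  have hne : σ * Real.sqrt t ≠ 0 := by positivity
  have hnum1 : HasDerivAt (fun s : ℝ => c * s - a) c t := by
    simpa using ((hasDerivAt_id t).const_mul c).sub_const a
  have hnum2 : HasDerivAt (fun s : ℝ => c * s + a) c t := by
    simpa using ((hasDerivAt_id t).const_mul c).add_const a
  have hu := hnum1.div hsd hne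
  have hv := hnum2.div hsd hne
  have h1 := (hasDerivAt_Phi ((c * t - a) / (σ * Real.sqrt t))).comp t hu
  have h2 := ((hasDerivAt_Phi ((c * t + a) / (σ * Real.sqrt t))).comp t hv).const_mul
    (Real.exp (2 * a * c / σ ^ 2))
  have H := h1.sub h2
  convert H using 1
  case e'_4 => rfl
  case e'_5 => rfl
  case e'_8 => rfl
  obtain ⟨r, hr, rfl⟩ : ∃ r : ℝ, 0 < r ∧ r ^ 2 = t := ⟨Real.sqrt t, hst, Real.sq_sqrt ht.le⟩
  rw [Real.sqrt_sq hr.le]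
  simp only [gaussFn, Function.comp]
  have hπ : (0:ℝ) ≤ 2 * π := by positivity
  have h3 : 2 * π * σ ^ 2 * (r ^ 2) ^ 3 = (Real.sqrt (2 * π) * (σ * r ^ 3)) ^ 2 := by
    rw [mul_pow, Real.sq_sqrt hπ]; ring
  rw [h3, Real.sqrt_sq (by positivity)]
  have hσ' : σ ≠ 0 := hσ.ne'
  have hr' : r ≠ 0 := hr.ne'
  have e1 : Real.exp (-(((c * r ^ 2 - a) / (σ * r)) ^ 2 / 2))
      = Real.exp (-(a - c * r ^ 2) ^ 2 / (2 * σ ^ 2 * r ^ 2)) := by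
    congr 1; field_simp; ring
  have e2 : Real.exp (2 * a * c / σ ^ 2) * Real.exp (-(((c * r ^ 2 + a) / (σ * r)) ^ 2 / 2))
      = Real.exp (-(a - c * r ^ 2) ^ 2 / (2 * σ ^ 2 * r ^ 2)) := by
    rw [← Real.exp_add]; congr 1; field_simp; ring
  rw [e1, show Real.exp (2 * a * c / σ ^ 2) *
      (Real.exp (-(((c * r ^ 2 + a) / (σ * r)) ^ 2 / 2)) *
        ((c * (σ * r) - (c * r ^ 2 + a) * (σ * (1 / (2 * r)))) / (σ * r) ^ 2))
    = (Real.exp (2 * a * c / σ ^ 2) * Real.exp (-(((c * r ^ 2 + a) / (σ * r)) ^ 2 / 2))) *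
        ((c * (σ * r) - (c * r ^ 2 + a) * (σ * (1 / (2 * r)))) / (σ * r) ^ 2) by ring, e2]
  have hs2 : Real.sqrt (2 * π) ≠ 0 := by positivity
  field_simp
  ring

/-- the inverse Gaussian density of the FPT of a drifted Brownian
motion to a linear boundary with slope less than the drift integrates to `1`
over `(0, ∞)`: the passage time is almost surely finite. -/
theorem inverseGaussian_density_integrates_to_one
    (α x₀ μ β σ : ℝ) (hα : x₀ < α) (hβ : β < μ) (hσ : 0 < σ) :
    (∫ t in Ioi (0 : ℝ),
        (α - x₀) / Real.sqrt (2 * Real.pi * σ ^ 2 * t ^ 3) *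
          Real.exp (-(α - x₀ - (μ - β) * t) ^ 2 / (2 * σ ^ 2 * t))) = 1 := by
  have ha : (0:ℝ) < α - x₀ := sub_pos.2 hα
  have hc : (0:ℝ) < μ - β := sub_pos.2 hβ
  set a := α - x₀ with ha_def
  set c := μ - β with hc_def
  set K := Real.exp (2 * a * c / σ ^ 2) with hK_def
  have hπ : (0:ℝ) < 2 * π := by positivity
  have hs2 : (0:ℝ) < Real.sqrt (2 * π) := Real.sqrt_pos.2 hπ
  set g : ℝ → ℝ := fun t =>
    if 0 < t then Phi ((c * t - a) / (σ * Real.sqrt t)) - K * Phi ((c * t + a) / (σ * Real.sqrt t))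
    else 0 - K * Real.sqrt (2 * π) with hg_def
  set D : ℝ → ℝ := fun t => Real.sqrt (2 * π) *
    (a / Real.sqrt (2 * π * σ ^ 2 * t ^ 3) * Real.exp (-(a - c * t) ^ 2 / (2 * σ ^ 2 * t)))
    with hD_def
  -- derivative
  have hderiv : ∀ t ∈ Ioi (0:ℝ), HasDerivAt g (D t) t := by
    intro t ht
    have h := key_hasDerivAt a c σ hσ ht
    refine h.congr_of_eventuallyEq ?_
    filter_upwards [isOpen_Ioi.mem_nhds ht] with y hy
    simp only [hg_def, if_pos (mem_Ioi.1 hy)]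
    rfl
  have hpos : ∀ t ∈ Ioi (0:ℝ), 0 ≤ D t := by
    intro t ht
    have ht' : (0:ℝ) < t := ht
    rw [hD_def]
    positivity
  -- sqrt tendsto lemmas
  have hsqrt_top : Tendsto Real.sqrt atTop atTop := by
    rw [show Real.sqrt = fun x : ℝ => x ^ (1/2 : ℝ) from funext fun x => Real.sqrt_eq_rpow x]
    exact tendsto_rpow_atTop (by norm_num)
  have hA_top : Tendsto (fun t => (c / σ) * Real.sqrt t) atTop atTop :=
    hsqrt_top.const_mul_atTop (div_pos hc hσ)
  have hB_zero : Tendsto (fun t => (a / σ) * (Real.sqrt t)⁻¹) atTop (𝓝 0) := by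
    have := (tendsto_inv_atTop_zero.comp hsqrt_top).const_mul (a / σ)
    simpa using this
  have hsq0 : Tendsto Real.sqrt (𝓝[>] (0:ℝ)) (𝓝[>] (0:ℝ)) := by
    rw [tendsto_nhdsWithin_iff]
    constructor
    · have := (Real.continuous_sqrt.tendsto 0).mono_left (nhdsWithin_le_nhds (s := Ioi (0:ℝ)))
      simpa using this
    · filter_upwards [self_mem_nhdsWithin] with t ht
      exact Real.sqrt_pos.2 ht
  have hB_top : Tendsto (fun t => (a / σ) * (Real.sqrt t)⁻¹) (𝓝[>] (0:ℝ)) atTop :=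
    (tendsto_inv_nhdsGT_zero.comp hsq0).const_mul_atTop (div_pos ha hσ)
  have hA_zero : Tendsto (fun t => (c / σ) * Real.sqrt t) (𝓝[>] (0:ℝ)) (𝓝 0) := by
    have := ((Real.continuous_sqrt.tendsto 0).mono_left
      (nhdsWithin_le_nhds (s := Ioi (0:ℝ)))).const_mul (c / σ)
    simpa using this
  -- pointwise identities
  have hueq : ∀ t : ℝ, 0 < t →
      (c / σ) * Real.sqrt t + -((a / σ) * (Real.sqrt t)⁻¹) = (c * t - a) / (σ * Real.sqrt t) := by
    intro t ht
    obtain ⟨r, hr, rfl⟩ : ∃ r : ℝ, 0 < r ∧ r ^ 2 = t := ⟨Real.sqrt t, Real.sqrt_pos.2 ht, Real.sq_sqrt ht.le⟩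
    rw [Real.sqrt_sq hr.le]
    field_simp
    ring
  have hveq : ∀ t : ℝ, 0 < t →
      (c / σ) * Real.sqrt t + (a / σ) * (Real.sqrt t)⁻¹ = (c * t + a) / (σ * Real.sqrt t) := by
    intro t ht
    obtain ⟨r, hr, rfl⟩ : ∃ r : ℝ, 0 < r ∧ r ^ 2 = t := ⟨Real.sqrt t, Real.sqrt_pos.2 ht, Real.sq_sqrt ht.le⟩
    rw [Real.sqrt_sq hr.le]
    field_simp
  -- limits of u, v
  have hu_top : Tendsto (fun t => (c * t - a) / (σ * Real.sqrt t)) atTop atTop := by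
    refine Tendsto.congr' ?_ (hA_top.atTop_add hB_zero.neg)
    filter_upwards [Ioi_mem_atTop (0:ℝ)] with t ht
    exact hueq t ht
  have hv_top : Tendsto (fun t => (c * t + a) / (σ * Real.sqrt t)) atTop atTop := by
    refine Tendsto.congr' ?_ (hA_top.atTop_add hB_zero)
    filter_upwards [Ioi_mem_atTop (0:ℝ)] with t ht
    exact hveq t ht
  have hu_bot : Tendsto (fun t => (c * t - a) / (σ * Real.sqrt t)) (𝓝[>] (0:ℝ)) atBot := by
    have hnB : Tendsto (fun t => -((a / σ) * (Real.sqrt t)⁻¹)) (𝓝[>] (0:ℝ)) atBot :=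
      tendsto_neg_atTop_atBot.comp hB_top
    refine Tendsto.congr' ?_ (hA_zero.add_atBot hnB)
    filter_upwards [self_mem_nhdsWithin] with t ht
    exact hueq t ht
  have hv_bot : Tendsto (fun t => (c * t + a) / (σ * Real.sqrt t)) (𝓝[>] (0:ℝ)) atTop := by
    refine Tendsto.congr' ?_ (hA_zero.add_atTop hB_top)
    filter_upwards [self_mem_nhdsWithin] with t ht
    exact hveq t ht
  -- limit of g at top
  have hgtop : Tendsto g atTop (𝓝 (Real.sqrt (2 * π) - K * Real.sqrt (2 * π))) := by
    have hF : Tendsto (fun t => Phi ((c * t - a) / (σ * Real.sqrt t))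
        - K * Phi ((c * t + a) / (σ * Real.sqrt t))) atTop
        (𝓝 (Real.sqrt (2 * π) - K * Real.sqrt (2 * π))) :=
      (Phi_tendsto_atTop.comp hu_top).sub ((Phi_tendsto_atTop.comp hv_top).const_mul K)
    refine Tendsto.congr' ?_ hF
    filter_upwards [Ioi_mem_atTop (0:ℝ)] with t ht
    simp only [hg_def, if_pos (mem_Ioi.1 ht)]
  -- continuity at 0 from the right
  have hg0 : g 0 = 0 - K * Real.sqrt (2 * π) := by simp [hg_def]
  have hcont : ContinuousWithinAt g (Ici 0) 0 := by
    rw [← Ioi_insert]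
    rw [continuousWithinAt_insert_self]
    have hF : Tendsto (fun t => Phi ((c * t - a) / (σ * Real.sqrt t))
        - K * Phi ((c * t + a) / (σ * Real.sqrt t))) (𝓝[>] (0:ℝ))
        (𝓝 (0 - K * Real.sqrt (2 * π))) :=
      (Phi_tendsto_atBot.comp hu_bot).sub ((Phi_tendsto_atTop.comp hv_bot).const_mul K)
    have : Tendsto g (𝓝[>] (0:ℝ)) (𝓝 (0 - K * Real.sqrt (2 * π))) := by
      refine Tendsto.congr' ?_ hF
      filter_upwards [self_mem_nhdsWithin] with t ht
      simp only [hg_def, if_pos (mem_Ioi.1 ht)]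
    unfold ContinuousWithinAt
    rwa [hg0]
  have main := integral_Ioi_of_hasDerivAt_of_nonneg hcont hderiv hpos hgtop
  rw [hg0] at main
  have main2 : (∫ t in Ioi (0:ℝ), D t) = Real.sqrt (2 * π) := by rw [main]; ring
  rw [hD_def] at main2
  rw [integral_const_mul] at main2
  have := mul_left_cancel₀ hs2.ne' (by rw [main2, mul_one] :
    Real.sqrt (2 * π) * (∫ t in Ioi (0:ℝ),
      a / Real.sqrt (2 * π * σ ^ 2 * t ^ 3) * Real.exp (-(a - c * t) ^ 2 / (2 * σ ^ 2 * t)))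
      = Real.sqrt (2 * π) * 1)
  exact this
end
end
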